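/- Let $\lambda(p)=p+\sum_{i\ge1}f_ip^{-i}$ and define $R_{i,j}:=-\mathrm{res}_{p=0}\left(\lambda(p)^j_+\,\partial_p\lambda(p)^i\right)$, where $A_+$ denotes the part of a formal Laurent series with nonnegative powers of $p$. Then $R_{i,j}=R_{j,i}$ for all $i,j\ge 1$. -/

import Mathlib

open Finset

noncomputable section

/-- The coefficient ring `ℚ[f₁, f₂, …]` (with `fᵢ = X i`). -/
abbrev Rf : Type := MvPolynomial ℕ ℚ

/-- We represent formal series `∑_{n ≤ m} aₙ pⁿ` in `p` (finitely many positive powers of `p`,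
formal power series in `p⁻¹`) as Laurent series in the variable `q := p⁻¹`:
the coefficient of `pⁿ` is the coefficient of the Laurent series at exponent `-n`. -/
abbrev LS : Type := LaurentSeries Rf

/-- `λ(p) = p + ∑_{i ≥ 1} fᵢ p⁻ⁱ`. -/
def lam : LS :=
  HahnSeries.single (-1 : ℤ) (1 : Rf) +
    HahnSeries.ofPowerSeries ℤ Rf (PowerSeries.mk fun i => if i = 0 then 0 else MvPolynomial.X i)

/-- `res_{p=0} A`: the coefficient of `p⁻¹` in `A`. -/
def pres (A : LS) : Rf := A.coeff 1

/-- `A₊`: the part of `A` with nonnegative powers of `p`. -/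
def plus (A : LS) : LS where
  coeff n := if n ≤ 0 then A.coeff n else 0
  isPWO_support' := A.isPWO_support'.mono (by
    intro n hn
    simp only [Function.mem_support] at hn ⊢
    intro h; apply hn; simp [h])

/-- `∂ₚ A`: the derivative of `A` with respect to `p`. -/
def derivP (A : LS) : LS where
  coeff m := (1 - m) • A.coeff (m - 1)
  isPWO_support' := ((A.isPWO_support'.image_of_monotone
      (f := fun n => n + 1) (fun _ _ h => by dsimp only; omega)).mono (by
    intro m hm
    simp only [Function.mem_support] at hm
    refine ⟨m - 1, ?_, by ring⟩
    simp only [Function.mem_support]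
    intro h; apply hm; rw [h, smul_zero]))

/-- `wᵢ = res_{p=0} λ(p)ⁱ`. -/
def wv (i : ℕ) : Rf := pres (lam ^ i)

/-- `R_{i,j} = -res_{p=0} (λ(p)ʲ₊ ∂ₚ λ(p)ⁱ)`. -/
def Rpq (i j : ℕ) : Rf := - pres (plus (lam ^ j) * derivP (lam ^ i))

end

noncomputable section

def euler (A : LS) : LS where
  coeff m := (-m : ℤ) • A.coeff m
  isPWO_support' := A.isPWO_support'.mono (by
    intro n hn
    simp only [Function.mem_support] at hn ⊢
    intro h; apply hn; rw [h, smul_zero])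

lemma euler_coeff (A : LS) (m : ℤ) : (euler A).coeff m = (-m) • A.coeff m := rfl

lemma euler_support (A : LS) : (euler A).support ⊆ A.support := by
  intro n hn
  simp only [HahnSeries.mem_support, euler_coeff] at hn ⊢
  intro h; apply hn; rw [h, smul_zero]

lemma euler_mul (x y : LS) : euler (x * y) = euler x * y + x * euler y := by
  apply HahnSeries.ext; funext g
  rw [HahnSeries.coeff_add, euler_coeff, HahnSeries.coeff_mul,
    HahnSeries.coeff_mul_left' x.isPWO_support (euler_support x),
    HahnSeries.coeff_mul_right' y.isPWO_support (euler_support y),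
    ← Finset.sum_add_distrib, Finset.smul_sum]
  refine Finset.sum_congr rfl ?_
  intro ij hij
  rw [Finset.mem_addAntidiagonal] at hij
  obtain ⟨-, -, h3⟩ := hij
  rw [euler_coeff, euler_coeff, smul_mul_assoc, mul_smul_comm, ← add_smul, ← neg_add, h3]

lemma single_one_mul_coeff (x : LS) (m : ℤ) :
    ((HahnSeries.single (1:ℤ) (1:Rf)) * x).coeff m = x.coeff (m-1) := by
  have h := HahnSeries.coeff_single_mul_add (b := (1:ℤ)) (r := (1:Rf)) (a := m - 1) (x := x)
  rw [one_mul] at h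
  rw [show m = m - 1 + 1 by ring]
  simpa using h

lemma derivP_eq (A : LS) : derivP A = (HahnSeries.single (1:ℤ) (1:Rf)) * euler A := by
  apply HahnSeries.ext; funext m
  rw [single_one_mul_coeff, euler_coeff]
  show (1 - m) • A.coeff (m-1) = (-(m-1)) • A.coeff (m-1)
  congr 1; ring

lemma derivP_mul (x y : LS) : derivP (x * y) = derivP x * y + x * derivP y := by
  rw [derivP_eq, derivP_eq, derivP_eq, euler_mul]
  ring

lemma derivP_coeff (A : LS) (m : ℤ) : (derivP A).coeff m = (1 - m) • A.coeff (m-1) := rfl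

lemma derivP_add (x y : LS) : derivP (x + y) = derivP x + derivP y := by
  apply HahnSeries.ext; funext m
  simp [derivP_coeff, HahnSeries.coeff_add, smul_add]


lemma pres_add (x y : LS) : pres (x + y) = pres x + pres y := rfl
lemma pres_sub (x y : LS) : pres (x - y) = pres x - pres y := by simp [pres, HahnSeries.coeff_sub]
lemma pres_smul (q : ℚ) (x : LS) : pres (q • x) = q • pres x := rfl
lemma pres_derivP (A : LS) : pres (derivP A) = 0 := by
  show ((1:ℤ) - 1) • A.coeff 0 = 0
  simp

end

lemma pres_C_mul (r : Rf) (x : LS) : pres (HahnSeries.C r * x) = r * pres x :=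
  HahnSeries.coeff_single_zero_mul

lemma derivP_pow (x : LS) (n : ℕ) :
    derivP (x ^ (n+1)) = HahnSeries.C ((n+1 : ℕ) : Rf) * (x ^ n * derivP x) := by
  induction n with
  | zero => simp [pow_one, pow_zero, one_mul]
  | succ n ih =>
    rw [pow_succ, derivP_mul, ih]
    rw [show ((n+1+1 : ℕ) : Rf) = ((n+1 : ℕ) : Rf) + 1 by push_cast; ring]
    rw [map_add, map_one]
    ring

lemma pres_pow_mul_derivP (lam : LS) (a b : ℕ) :
    pres (lam ^ a * derivP (lam ^ (b+1))) = 0 := by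
  have hz : pres (lam ^ (a+b) * derivP lam) = 0 := by
    have h0 : pres (derivP (lam ^ (a+b+1))) = 0 := pres_derivP _
    rw [derivP_pow, pres_C_mul, mul_eq_zero] at h0
    rcases h0 with h | h
    · exact absurd h (Nat.cast_ne_zero.mpr (by omega))
    · exact h
  rw [derivP_pow, mul_left_comm, pres_C_mul, ← mul_assoc, ← pow_add, hz, mul_zero]

lemma mul_pres_zero_of_nonpos {x y : LS} (hx : ∀ n, 0 < n → x.coeff n = 0)
    (hy : ∀ n, 0 < n → y.coeff n = 0) : pres (x * y) = 0 := by
  show (x * y).coeff 1 = 0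
  rw [HahnSeries.coeff_mul]
  apply Finset.sum_eq_zero
  intro ij hij
  rw [Finset.mem_addAntidiagonal] at hij
  obtain ⟨h1, h2, h3⟩ := hij
  have e1 : ij.1 ≤ 0 := by
    by_contra h; push_neg at h; exact h1 (hx _ h)
  have e2 : ij.2 ≤ 0 := by
    by_contra h; push_neg at h; exact h2 (hy _ h)
  exact absurd h3 (by omega)

lemma mul_pres_zero_of_pos {x y : LS} (hx : ∀ n, n ≤ 0 → x.coeff n = 0)
    (hy : ∀ n, n ≤ 0 → y.coeff n = 0) : pres (x * y) = 0 := by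
  show (x * y).coeff 1 = 0
  rw [HahnSeries.coeff_mul]
  apply Finset.sum_eq_zero
  intro ij hij
  rw [Finset.mem_addAntidiagonal] at hij
  obtain ⟨h1, h2, h3⟩ := hij
  have e1 : 0 < ij.1 := by
    by_contra h; push_neg at h; exact h1 (hx _ h)
  have e2 : 0 < ij.2 := by
    by_contra h; push_neg at h; exact h2 (hy _ h)
  exact absurd h3 (by omega)

lemma plus_coeff (A : LS) (n : ℤ) : (plus A).coeff n = if n ≤ 0 then A.coeff n else 0 := rfl

lemma plus_coeff_pos (A : LS) {n : ℤ} (hn : 0 < n) : (plus A).coeff n = 0 := by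
  rw [plus_coeff, if_neg (by omega)]

lemma minus_coeff_nonpos (A : LS) {n : ℤ} (hn : n ≤ 0) : (A - plus A).coeff n = 0 := by
  rw [HahnSeries.coeff_sub, plus_coeff, if_pos hn, sub_self]

lemma derivP_plus_coeff_pos (A : LS) {n : ℤ} (hn : 0 < n) : (derivP (plus A)).coeff n = 0 := by
  rw [derivP_coeff]
  rcases eq_or_lt_of_le (show (1:ℤ) ≤ n by omega) with h | h
  · rw [← h]; simp
  · rw [plus_coeff_pos A (by omega), smul_zero]

lemma derivP_minus_coeff_nonpos (A : LS) {n : ℤ} (hn : n ≤ 0) :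
    (derivP (A - plus A)).coeff n = 0 := by
  rw [derivP_coeff, minus_coeff_nonpos A (by omega), smul_zero]

lemma key (lam : LS) (i j : ℕ) (hj : 1 ≤ j) :
    pres (plus (lam ^ j) * derivP (lam ^ i)) = pres (plus (lam ^ i) * derivP (lam ^ j)) := by
  set A := lam ^ i with hA
  set B := lam ^ j with hB
  have h1 : pres (plus B * derivP (plus A)) = 0 :=
    mul_pres_zero_of_nonpos (fun n hn => plus_coeff_pos B hn)
      (fun n hn => derivP_plus_coeff_pos A hn)
  have h2 : pres (plus B * derivP A) = pres (plus B * derivP (A - plus A)) := by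
    conv_lhs => rw [show A = plus A + (A - plus A) by ring]
    rw [derivP_add, mul_add, pres_add, h1, zero_add]
  have h3 : pres (derivP (plus B) * (A - plus A)) + pres (plus B * derivP (A - plus A)) = 0 := by
    rw [← pres_add, ← derivP_mul]
    exact pres_derivP _
  have h4 : pres (derivP (B - plus B) * (A - plus A)) = 0 := by
    refine mul_pres_zero_of_pos (fun n hn => derivP_minus_coeff_nonpos B hn)
      (fun n hn => minus_coeff_nonpos A hn)
  have h5 : pres (derivP B * (A - plus A)) = pres (derivP (plus B) * (A - plus A)) := by
    conv_lhs => rw [show B = plus B + (B - plus B) by ring]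
    rw [derivP_add, add_mul, pres_add, h4, add_zero]
  have h6 : pres (derivP B * A) = 0 := by
    obtain ⟨j', rfl⟩ : ∃ j', j = j' + 1 := ⟨j - 1, by omega⟩
    rw [mul_comm, hA, hB]
    exact pres_pow_mul_derivP lam i j'
  have h7 : pres (derivP B * (A - plus A)) = - pres (derivP B * plus A) := by
    rw [mul_sub, pres_sub, h6, zero_sub]
  rw [h2, mul_comm (plus A) (derivP B)]
  rw [← h5, h7] at h3
  linear_combination h3



/-- `R_{i,j} = R_{j,i}` for all `i, j ≥ 1`. -/
theorem statement9 (i j : ℕ) (hi : 1 ≤ i) (hj : 1 ≤ j) : Rpq i j = Rpq j i := by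
  unfold Rpq
  rw [key lam i j hj]
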